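/- For each n ≥ 1, the map Φ sending a triple (σ, λ, μ), where σ is a permutation of {1,…,n} and λ, μ are partitions with at most n parts, to the multiset of n cells { (d_i(σ) + λ_{n+1−i}, d_{σ(i)}(σ^{-1}) + μ_{n+1−σ(i)}) : 1 ≤ i ≤ n } in ℕ×ℕ, is a bijection from S_n × {partitions with at most n parts} × {partitions with at most n parts} onto the set of all multisets of cardinality n of elements of ℕ×ℕ. Moreover, for D = Φ(σ,λ,μ), the sum of the first coordinates of the cells of D equals (Σ_{i=1}^n d_i(σ)) + |λ| and the sum of the second coordinates equals (Σ_{j=1}^n d_j(σ^{-1})) + |μ|. -/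

import Mathlib

attribute [local instance] Classical.propDecidable

/-- The set of (1-based) descents of a permutation `σ` of `{1,…,n}`:
indices `1 ≤ i ≤ n-1` with `σ(i) > σ(i+1)` (internally 0-based on `Fin n`). -/
noncomputable def descSet {n : ℕ} (σ : Equiv.Perm (Fin n)) : Finset ℕ :=
  (Finset.range n).filter fun i =>
    ∃ (_ : 1 ≤ i) (h2 : i < n),
      σ ⟨i, h2⟩ < σ ⟨i - 1, Nat.lt_of_le_of_lt (Nat.sub_le i 1) h2⟩

/-- `dstat σ i = d_{i+1}(σ)`: the number of (1-based) descents `k` of `σ` with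
`k < i+1`, i.e. the statistic `d_i` of the paper at the 1-based position `i+1`. -/
noncomputable def dstat {n : ℕ} (σ : Equiv.Perm (Fin n)) (i : Fin n) : ℕ :=
  ((descSet σ).filter fun k => k < (i : ℕ) + 1).card

/-- Partitions with at most `n` parts: antitone vectors in `ℕ^n`. -/
def PartN (n : ℕ) := {l : Fin n → ℕ // ∀ i j : Fin n, i ≤ j → l j ≤ l i}

/-- The map `Φ` sending `(σ, λ, μ)` to the multiset of `n` cells
`{(d_i(σ) + λ_{n+1-i}, d_{σ(i)}(σ⁻¹) + μ_{n+1-σ(i)}) : 1 ≤ i ≤ n}` (here 0-based: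
`λ_{n+1-i}` becomes `λ (Fin.rev i)`). -/
noncomputable def Phi (n : ℕ) (t : Equiv.Perm (Fin n) × PartN n × PartN n) :
    {m : Multiset (ℕ × ℕ) // Multiset.card m = n} :=
  ⟨(Finset.univ.val : Multiset (Fin n)).map fun i =>
      (dstat t.1 i + t.2.1.1 i.rev, dstat t.1⁻¹ (t.1 i) + t.2.2.1 (t.1 i).rev),
    by simp⟩


/-- `dstat` as a function of a natural number index. -/
noncomputable def dnat {n : ℕ} (σ : Equiv.Perm (Fin n)) (i : ℕ) : ℕ :=
  ((descSet σ).filter fun k => k < i + 1).card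

lemma dstat_eq_dnat {n : ℕ} (σ : Equiv.Perm (Fin n)) (i : Fin n) :
    dstat σ i = dnat σ (i : ℕ) := rfl

lemma mem_descSet {n : ℕ} {σ : Equiv.Perm (Fin n)} {k : ℕ} (hk : k < n) :
    k ∈ descSet σ ↔ 1 ≤ k ∧ σ ⟨k, hk⟩ < σ ⟨k - 1, Nat.lt_of_le_of_lt (Nat.sub_le k 1) hk⟩ := by
  unfold descSet
  simp only [Finset.mem_filter, Finset.mem_range]
  constructor
  · rintro ⟨-, h1, h2, h3⟩; exact ⟨h1, h3⟩
  · rintro ⟨h1, h3⟩; exact ⟨hk, h1, hk, h3⟩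

lemma filter_lt_succ_card (s : Finset ℕ) (i : ℕ) :
    (s.filter fun k => k < i + 2).card
      = (s.filter fun k => k < i + 1).card + if i + 1 ∈ s then 1 else 0 := by
  classical
  have h1 : (s.filter fun k => k < i + 2)
      = (s.filter fun k => k < i + 1) ∪ (s.filter fun k => k = i + 1) := by
    rw [← Finset.filter_or]
    apply Finset.filter_congr
    intro k _
    omega
  rw [h1, Finset.card_union_of_disjoint, Finset.filter_eq']
  · split <;> simp
  · rw [Finset.disjoint_left]
    intro a ha hb
    simp only [Finset.mem_filter] at ha hb
    omega

lemma dnat_zero {n : ℕ} (σ : Equiv.Perm (Fin n)) : dnat σ 0 = 0 := by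
  rw [dnat, Finset.card_eq_zero, Finset.filter_eq_empty_iff]
  intro k hk
  rcases Finset.mem_filter.mp hk with ⟨hk1, -⟩
  have := (mem_descSet (Finset.mem_range.mp hk1)).mp hk
  omega

lemma dnat_mono {n : ℕ} (σ : Equiv.Perm (Fin n)) {i j : ℕ} (h : i ≤ j) :
    dnat σ i ≤ dnat σ j := by
  apply Finset.card_le_card
  apply Finset.monotone_filter_right
  intro k hk
  omega

lemma dnat_succ {n : ℕ} (σ : Equiv.Perm (Fin n)) {i : ℕ} (h : i + 1 < n) :
    dnat σ (i + 1)
      = dnat σ i + if σ ⟨i + 1, h⟩ < σ ⟨i, Nat.lt_of_succ_lt h⟩ then 1 else 0 := by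
  have h2 := filter_lt_succ_card (descSet σ) i
  have h3 : (i + 1 ∈ descSet σ) = (σ ⟨i + 1, h⟩ < σ ⟨i, Nat.lt_of_succ_lt h⟩) := by
    rw [mem_descSet h]
    simp only [Nat.add_sub_cancel, eq_iff_iff]
    constructor
    · rintro ⟨-, h4⟩; exact h4
    · intro h4; exact ⟨by omega, h4⟩
  have h2' : dnat σ (i + 1) = dnat σ i + if i + 1 ∈ descSet σ then 1 else 0 := h2
  rw [h2']
  congr 1
  simp only [h3]

lemma dnat_step {n : ℕ} (π : Equiv.Perm (Fin n)) {i : ℕ} (h : i + 1 < n)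
    (he : dnat π i = dnat π (i + 1)) :
    π ⟨i, Nat.lt_of_succ_lt h⟩ < π ⟨i + 1, h⟩ := by
  rw [dnat_succ π h] at he
  have h0 : ¬ (π ⟨i + 1, h⟩ < π ⟨i, Nat.lt_of_succ_lt h⟩) := by
    intro hc
    rw [if_pos hc] at he
    omega
  have hne : π ⟨i, Nat.lt_of_succ_lt h⟩ ≠ π ⟨i + 1, h⟩ := by
    intro hc
    have := π.injective hc
    simp only [Fin.mk.injEq] at this
    omega
  exact lt_of_le_of_ne (le_of_not_gt h0) hne

lemma dnat_lt {n : ℕ} (π : Equiv.Perm (Fin n)) :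
    ∀ (d : ℕ) (i j : Fin n), (j : ℕ) = (i : ℕ) + d + 1 → dnat π (i : ℕ) = dnat π (j : ℕ) →
      π i < π j := by
  intro d
  induction d with
  | zero =>
    intro i j hij he
    have h : (i : ℕ) + 1 < n := by have := j.isLt; omega
    have hj : j = ⟨(i : ℕ) + 1, h⟩ := Fin.ext (by show (j : ℕ) = (i : ℕ) + 1; omega)
    rw [hj] at he ⊢
    exact dnat_step π h he
  | succ d ih =>
    intro i j hij he
    have hk : (i : ℕ) + 1 < n := by have := j.isLt; omega
    have h1 : dnat π (i : ℕ) ≤ dnat π ((i : ℕ) + 1) := dnat_mono π (Nat.le_succ _)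
    have h2 : dnat π ((i : ℕ) + 1) ≤ dnat π (j : ℕ) := dnat_mono π (by omega)
    have e1 : dnat π (i : ℕ) = dnat π ((i : ℕ) + 1) := by omega
    have e2 : dnat π ((i : ℕ) + 1) = dnat π (j : ℕ) := by omega
    have hik : π i < π (⟨(i : ℕ) + 1, hk⟩ : Fin n) := dnat_step π hk e1
    refine lt_trans hik (ih ⟨(i : ℕ) + 1, hk⟩ j ?_ ?_)
    · show (j : ℕ) = (i : ℕ) + 1 + d + 1
      omega
    · exact e2

lemma dstat_lt {n : ℕ} (π : Equiv.Perm (Fin n)) {i j : Fin n} (hij : i < j)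
    (he : dstat π i = dstat π j) : π i < π j := by
  have hv : (i : ℕ) < (j : ℕ) := hij
  exact dnat_lt π ((j : ℕ) - (i : ℕ) - 1) i j (by omega) he

lemma dstat_mono {n : ℕ} (π : Equiv.Perm (Fin n)) {i j : Fin n} (h : i ≤ j) :
    dstat π i ≤ dstat π j := dnat_mono π (by exact_mod_cast h)

lemma key_mono {n : ℕ} (π : Equiv.Perm (Fin n)) (ν : PartN n) {i j : Fin n} (hij : i < j) :
    dstat π i + ν.1 i.rev ≤ dstat π j + ν.1 j.rev ∧
    (dstat π i + ν.1 i.rev = dstat π j + ν.1 j.rev → π i < π j) := by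
  have h1 : dstat π i ≤ dstat π j := dstat_mono π hij.le
  have h2 : ν.1 i.rev ≤ ν.1 j.rev := ν.2 j.rev i.rev (Fin.rev_le_rev.mpr hij.le)
  exact ⟨by omega, fun he => dstat_lt π hij (by omega)⟩

lemma perm_eq_of_lt_iff {n : ℕ} (σ σ' : Equiv.Perm (Fin n))
    (h : ∀ i j, σ i < σ j ↔ σ' i < σ' j) : σ' = σ := by
  have hg : StrictMono ⇑(σ.symm.trans σ') := by
    intro a b hab
    have h2 : σ (σ.symm a) < σ (σ.symm b) := by simpa using hab
    exact (h _ _).mp h2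
  have hg' : StrictMono ⇑(σ.symm.trans σ').symm := by
    intro a b hab
    rw [← hg.lt_iff_lt]
    simpa using hab
  haveI : WellFoundedLT (Fin n) := Finite.to_wellFoundedLT
  have hid : ∀ x, (σ.symm.trans σ') x = x := by
    intro x
    have ha : x ≤ (σ.symm.trans σ') x := hg.le_apply (x := x)
    have hb := hg'.le_apply (x := (σ.symm.trans σ') x)
    simp only [Equiv.symm_apply_apply] at hb
    exact le_antisymm hb ha
  apply Equiv.ext
  intro x
  simpa using hid (σ x)

/-- Lexicographic-type order on cells. -/
def cellLE (p q : ℕ × ℕ) : Prop := p.1 < q.1 ∨ (p.1 = q.1 ∧ p.2 ≤ q.2)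

instance : IsTrans (ℕ × ℕ) cellLE := ⟨by intro a b c hab hbc; unfold cellLE at *; omega⟩
instance : IsAntisymm (ℕ × ℕ) cellLE := ⟨by
  intro a b hab hba
  unfold cellLE at *
  have h1 : a.1 = b.1 := by omega
  have h2 : a.2 = b.2 := by omega
  exact Prod.ext h1 h2⟩
instance : IsTotal (ℕ × ℕ) cellLE := ⟨by intro a b; unfold cellLE; omega⟩

noncomputable instance : DecidableRel cellLE := fun _ _ => Classical.propDecidable _

/-- The cell function underlying `Phi`. -/
noncomputable def cellOf {n : ℕ} (t : Equiv.Perm (Fin n) × PartN n × PartN n) (i : Fin n) :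
    ℕ × ℕ :=
  (dstat t.1 i + t.2.1.1 i.rev, dstat t.1⁻¹ (t.1 i) + t.2.2.1 (t.1 i).rev)

lemma Phi_val {n : ℕ} (t : Equiv.Perm (Fin n) × PartN n × PartN n) :
    (Phi n t).1 = (Finset.univ.val : Multiset (Fin n)).map (cellOf t) := rfl

lemma fst_forward {n : ℕ} (t : Equiv.Perm (Fin n) × PartN n × PartN n) {i j : Fin n}
    (h : i < j) :
    (cellOf t i).1 < (cellOf t j).1 ∨
      ((cellOf t i).1 = (cellOf t j).1 ∧ t.1 i < t.1 j) := by
  have hk := key_mono t.1 t.2.1 h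
  rcases lt_or_eq_of_le hk.1 with h' | h'
  · exact Or.inl h'
  · exact Or.inr ⟨h', hk.2 h'⟩

lemma snd_forward {n : ℕ} (t : Equiv.Perm (Fin n) × PartN n × PartN n) {i j : Fin n}
    (h : t.1 i < t.1 j) :
    (cellOf t i).2 < (cellOf t j).2 ∨
      ((cellOf t i).2 = (cellOf t j).2 ∧ i < j) := by
  have hk := key_mono t.1⁻¹ t.2.2 h
  rcases lt_or_eq_of_le hk.1 with h' | h'
  · exact Or.inl h'
  · refine Or.inr ⟨h', ?_⟩
    have := hk.2 h'
    simpa using this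

lemma snd_iff {n : ℕ} (t : Equiv.Perm (Fin n) × PartN n × PartN n) (i j : Fin n) :
    t.1 i < t.1 j ↔
      ((cellOf t i).2 < (cellOf t j).2 ∨ ((cellOf t i).2 = (cellOf t j).2 ∧ i < j)) := by
  constructor
  · exact snd_forward t
  · intro h
    rcases lt_trichotomy (t.1 i) (t.1 j) with hc | hc | hc
    · exact hc
    · exfalso
      have hij : i = j := t.1.injective hc
      subst hij
      rcases h with h | ⟨-, h⟩
      · exact lt_irrefl _ h
      · exact lt_irrefl _ h
    · exfalso
      have h2 := snd_forward t hc
      rcases h with h | ⟨he, hij⟩ <;> rcases h2 with h2 | ⟨he2, hij2⟩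
      · omega
      · omega
      · omega
      · exact absurd hij2 (lt_asymm hij)

lemma sorted_cellOf {n : ℕ} (t : Equiv.Perm (Fin n) × PartN n × PartN n) :
    List.Pairwise cellLE (List.ofFn (cellOf t)) := by
  rw [List.pairwise_ofFn]
  intro i j hij
  rcases fst_forward t hij with h | ⟨he, hlt⟩
  · exact Or.inl h
  · refine Or.inr ⟨he, ?_⟩
    rcases snd_forward t hlt with h | ⟨he2, -⟩
    · exact le_of_lt h
    · exact le_of_eq he2

lemma Phi_injective (n : ℕ) : Function.Injective (Phi n) := by
  intro t t' h
  have hv : (Finset.univ.val : Multiset (Fin n)).map (cellOf t)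
      = (Finset.univ.val : Multiset (Fin n)).map (cellOf t') := by
    rw [← Phi_val, ← Phi_val, h]
  rw [Fin.univ_val_map, Fin.univ_val_map] at hv
  have hperm := Multiset.coe_eq_coe.mp hv
  have hlist : List.ofFn (cellOf t) = List.ofFn (cellOf t') :=
    List.Perm.eq_of_pairwise' (sorted_cellOf t) (sorted_cellOf t') hperm
  have hc : cellOf t = cellOf t' := List.ofFn_injective hlist
  have hσ : t'.1 = t.1 := by
    apply perm_eq_of_lt_iff
    intro i j
    rw [snd_iff t, snd_iff t', hc]
  have hlam : t.2.1 = t'.2.1 := by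
    apply Subtype.ext
    funext k
    have h1 := congrFun hc k.rev
    have h2 : (cellOf t k.rev).1 = (cellOf t' k.rev).1 := by rw [h1]
    unfold cellOf at h2
    rw [Fin.rev_rev, ← hσ] at h2
    exact Nat.add_left_cancel h2
  have hmu : t.2.2 = t'.2.2 := by
    apply Subtype.ext
    funext k
    have h1 := congrFun hc (t.1⁻¹ (k.rev))
    have h2 : (cellOf t (t.1⁻¹ k.rev)).2 = (cellOf t' (t.1⁻¹ k.rev)).2 := by rw [h1]
    unfold cellOf at h2
    rw [← hσ] at h2
    simp only [Equiv.Perm.coe_inv, Equiv.apply_symm_apply, Fin.rev_rev] at h2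
    exact Nat.add_left_cancel h2
  have h1 : t.2 = t'.2 := Prod.ext hlam hmu
  exact Prod.ext hσ.symm h1

lemma tele_aux (f g : ℕ → ℕ) (N : ℕ)
    (hstep : ∀ i, i + 1 < N → g (i + 1) + f i ≤ g i + f (i + 1)) :
    ∀ (d i : ℕ), i + d < N → g (i + d) + f i ≤ g i + f (i + d) := by
  intro d
  induction d with
  | zero => intro i _; simp
  | succ d ih =>
    intro i hi
    have h1 := ih i (by omega)
    have h2 := hstep (i + d) (by omega)
    show g (i + d + 1) + f i ≤ g i + f (i + d + 1)
    omega

lemma Phi_surjective (n : ℕ) : Function.Surjective (Phi n) := by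
  rintro ⟨m, hm⟩
  obtain ⟨l, hsort, hl, hlen⟩ :
      ∃ l : List (ℕ × ℕ), List.Pairwise cellLE l ∧ (↑l : Multiset (ℕ × ℕ)) = m ∧ l.length = n :=
    ⟨Multiset.sort m cellLE, Multiset.pairwise_sort m _, Multiset.sort_eq m _,
      by rw [Multiset.length_sort, hm]⟩
  subst hlen
  set c : ℕ → ℕ × ℕ := fun i => l.getD i (0, 0) with hcdef
  have hc_get : ∀ (i : Fin l.length), c (i : ℕ) = l.get i := by
    intro i
    simp [hcdef, List.getD_eq_getElem l (0, 0) i.isLt, List.get_eq_getElem]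
  have hsp : ∀ (i j : ℕ) (hj : j < l.length), i < j → cellLE (c i) (c j) := by
    intro i j hj hij
    have h := hsort.rel_get_of_lt (a := ⟨i, lt_trans hij hj⟩) (b := ⟨j, hj⟩) (by exact hij)
    rwa [← hc_get, ← hc_get] at h
  set key : Fin l.length → Lex (ℕ × Fin l.length) := fun i => toLex ((c (i : ℕ)).2, i)
    with hkey
  have hkeyinj : Function.Injective key := by
    intro a b hab
    have h := congrArg (fun x => (ofLex x).2) hab
    simpa [hkey] using h
  set σ : Equiv.Perm (Fin l.length) := (Tuple.sort key)⁻¹ with hσdef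
  have hsm : StrictMono (key ∘ (Tuple.sort key)) :=
    (Tuple.monotone_sort key).strictMono_of_injective (hkeyinj.comp (Equiv.injective _))
  have horder : ∀ i j, σ i < σ j ↔ key i < key j := by
    intro i j
    rw [← hsm.lt_iff_lt (a := σ i) (b := σ j)]
    simp [hσdef, Function.comp]
  have hkl : ∀ i j : Fin l.length, σ i < σ j ↔
      ((c (i : ℕ)).2 < (c (j : ℕ)).2 ∨ ((c (i : ℕ)).2 = (c (j : ℕ)).2 ∧ i < j)) := by
    intro i j
    rw [horder, hkey]
    simpa using Prod.Lex.lt_iff (x := toLex ((c (i : ℕ)).2, i)) (y := toLex ((c (j : ℕ)).2, j))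
  -- first coordinates
  have hstep1 : ∀ i, i + 1 < l.length →
      dnat σ (i + 1) + (c i).1 ≤ dnat σ i + (c (i + 1)).1 := by
    intro i h
    rw [dnat_succ σ h]
    have hs := hsp i (i + 1) h (Nat.lt_succ_self i)
    unfold cellLE at hs
    split_ifs with hd
    · have hk := (hkl ⟨i + 1, h⟩ ⟨i, Nat.lt_of_succ_lt h⟩).mp hd
      have hk' : (c (i + 1)).2 < (c i).2 ∨ ((c (i + 1)).2 = (c i).2 ∧
          ((⟨i + 1, h⟩ : Fin l.length) < ⟨i, Nat.lt_of_succ_lt h⟩)) := hk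
      have hnlt : ¬ ((⟨i + 1, h⟩ : Fin l.length) < ⟨i, Nat.lt_of_succ_lt h⟩) := by
        rw [Fin.mk_lt_mk]; omega
      have hlt2 : (c (i + 1)).2 < (c i).2 := by
        rcases hk' with h' | ⟨-, h'⟩
        · exact h'
        · exact absurd h' hnlt
      omega
    · omega
  have htele1 := tele_aux (fun i => (c i).1) (fun i => dnat σ i) l.length hstep1
  have hle1 : ∀ b, b < l.length → dnat σ b ≤ (c b).1 := by
    intro b hb
    have h := htele1 b 0 (by omega)
    simp only [Nat.zero_add] at h
    rw [dnat_zero σ] at h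
    omega
  -- second coordinates
  set cs : ℕ → ℕ :=
    fun j => if hj : j < l.length then (c ((σ⁻¹ ⟨j, hj⟩ : Fin l.length) : ℕ)).2 else 0
    with hcs
  have hcs_eval : ∀ (j : Fin l.length), cs (j : ℕ) = (c ((σ⁻¹ j : Fin l.length) : ℕ)).2 := by
    intro j
    rw [hcs]
    simp only [j.isLt, dif_pos, Fin.eta]
  have hstep2 : ∀ j, j + 1 < l.length →
      dnat σ⁻¹ (j + 1) + cs j ≤ dnat σ⁻¹ j + cs (j + 1) := by
    intro j h
    have hj : j < l.length := Nat.lt_of_succ_lt h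
    have e0 : cs j = (c ((σ⁻¹ (⟨j, hj⟩ : Fin l.length) : Fin l.length) : ℕ)).2 :=
      hcs_eval ⟨j, hj⟩
    have e1 : cs (j + 1) = (c ((σ⁻¹ (⟨j + 1, h⟩ : Fin l.length) : Fin l.length) : ℕ)).2 :=
      hcs_eval ⟨j + 1, h⟩
    have hkk := hkl (σ⁻¹ ⟨j, hj⟩) (σ⁻¹ ⟨j + 1, h⟩)
    simp only [Equiv.Perm.coe_inv, Equiv.apply_symm_apply] at hkk
    have hj01 : (⟨j, hj⟩ : Fin l.length) < ⟨j + 1, h⟩ := by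
      rw [Fin.mk_lt_mk]; omega
    have hdisj := hkk.mp hj01
    rw [dnat_succ σ⁻¹ h, e0, e1]
    split_ifs with hd
    · have hd' : σ⁻¹ (⟨j + 1, h⟩ : Fin l.length) < σ⁻¹ (⟨j, hj⟩ : Fin l.length) := hd
      have hstrict : (c ((σ⁻¹ (⟨j, hj⟩ : Fin l.length) : Fin l.length) : ℕ)).2
          < (c ((σ⁻¹ (⟨j + 1, h⟩ : Fin l.length) : Fin l.length) : ℕ)).2 := by
        rcases hdisj with h' | ⟨-, h'⟩
        · exact h'
        · exact absurd h' (lt_asymm hd')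
      omega
    · have hle' : (c ((σ⁻¹ (⟨j, hj⟩ : Fin l.length) : Fin l.length) : ℕ)).2
          ≤ (c ((σ⁻¹ (⟨j + 1, h⟩ : Fin l.length) : Fin l.length) : ℕ)).2 := by
        rcases hdisj with h' | ⟨h', -⟩
        · exact le_of_lt h'
        · exact le_of_eq h'
      omega
  have htele2 := tele_aux cs (fun j => dnat σ⁻¹ j) l.length hstep2
  have hle2 : ∀ b, b < l.length → dnat σ⁻¹ b ≤ cs b := by
    intro b hb
    have h := htele2 b 0 (by omega)
    simp only [Nat.zero_add] at h
    rw [dnat_zero σ⁻¹] at h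
    omega
  -- the partitions
  have hlamproof : ∀ k k' : Fin l.length, k ≤ k' →
      (c ((k'.rev : Fin l.length) : ℕ)).1 - dnat σ ((k'.rev : Fin l.length) : ℕ)
        ≤ (c ((k.rev : Fin l.length) : ℕ)).1 - dnat σ ((k.rev : Fin l.length) : ℕ) := by
    intro k k' hkk'
    have hab : ((k'.rev : Fin l.length) : ℕ) ≤ ((k.rev : Fin l.length) : ℕ) :=
      Fin.rev_le_rev.mpr hkk'
    have hb : ((k.rev : Fin l.length) : ℕ) < l.length := (k.rev).isLt
    have ht := htele1 (((k.rev : Fin l.length) : ℕ) - ((k'.rev : Fin l.length) : ℕ))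
      ((k'.rev : Fin l.length) : ℕ) (by omega)
    have ht' : dnat σ (((k'.rev : Fin l.length) : ℕ) + (((k.rev : Fin l.length) : ℕ)
          - ((k'.rev : Fin l.length) : ℕ))) + (c ((k'.rev : Fin l.length) : ℕ)).1
        ≤ dnat σ ((k'.rev : Fin l.length) : ℕ) + (c (((k'.rev : Fin l.length) : ℕ)
          + (((k.rev : Fin l.length) : ℕ) - ((k'.rev : Fin l.length) : ℕ)))).1 := ht
    rw [Nat.add_sub_cancel' hab] at ht'
    have h1 := hle1 ((k'.rev : Fin l.length) : ℕ) (by omega)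
    omega
  have hmuproof : ∀ k k' : Fin l.length, k ≤ k' →
      cs ((k'.rev : Fin l.length) : ℕ) - dnat σ⁻¹ ((k'.rev : Fin l.length) : ℕ)
        ≤ cs ((k.rev : Fin l.length) : ℕ) - dnat σ⁻¹ ((k.rev : Fin l.length) : ℕ) := by
    intro k k' hkk'
    have hab : ((k'.rev : Fin l.length) : ℕ) ≤ ((k.rev : Fin l.length) : ℕ) :=
      Fin.rev_le_rev.mpr hkk'
    have hb : ((k.rev : Fin l.length) : ℕ) < l.length := (k.rev).isLt
    have ht := htele2 (((k.rev : Fin l.length) : ℕ) - ((k'.rev : Fin l.length) : ℕ))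
      ((k'.rev : Fin l.length) : ℕ) (by omega)
    have ht' : dnat σ⁻¹ (((k'.rev : Fin l.length) : ℕ) + (((k.rev : Fin l.length) : ℕ)
          - ((k'.rev : Fin l.length) : ℕ))) + cs ((k'.rev : Fin l.length) : ℕ)
        ≤ dnat σ⁻¹ ((k'.rev : Fin l.length) : ℕ) + cs (((k'.rev : Fin l.length) : ℕ)
          + (((k.rev : Fin l.length) : ℕ) - ((k'.rev : Fin l.length) : ℕ))) := ht
    rw [Nat.add_sub_cancel' hab] at ht'
    have h1 := hle2 ((k'.rev : Fin l.length) : ℕ) (by omega)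
    omega
  let lam : PartN l.length :=
    ⟨fun k => (c ((k.rev : Fin l.length) : ℕ)).1 - dnat σ ((k.rev : Fin l.length) : ℕ),
      hlamproof⟩
  let mu : PartN l.length :=
    ⟨fun k => cs ((k.rev : Fin l.length) : ℕ) - dnat σ⁻¹ ((k.rev : Fin l.length) : ℕ),
      hmuproof⟩
  refine ⟨(σ, lam, mu), Subtype.ext ?_⟩
  have hcell : ∀ i0 : Fin l.length, cellOf (σ, lam, mu) i0 = c (i0 : ℕ) := by
    intro i0
    refine Prod.ext ?_ ?_
    · show dnat σ (i0 : ℕ) + ((c ((i0.rev.rev : Fin l.length) : ℕ)).1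
          - dnat σ ((i0.rev.rev : Fin l.length) : ℕ)) = (c (i0 : ℕ)).1
      rw [Fin.rev_rev]
      exact Nat.add_sub_cancel' (hle1 _ i0.isLt)
    · show dnat σ⁻¹ ((σ i0 : Fin l.length) : ℕ) + (cs (((σ i0).rev.rev : Fin l.length) : ℕ)
          - dnat σ⁻¹ (((σ i0).rev.rev : Fin l.length) : ℕ)) = (c (i0 : ℕ)).2
      rw [Fin.rev_rev]
      rw [Nat.add_sub_cancel' (hle2 _ (σ i0).isLt)]
      rw [hcs_eval (σ i0)]
      simp only [Equiv.Perm.coe_inv, Equiv.symm_apply_apply]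
  have hfun : cellOf (σ, lam, mu) = l.get := by
    funext i0
    rw [hcell i0, hc_get i0]
  rw [Phi_val, Fin.univ_val_map, hfun, List.ofFn_get]
  exact hl

/-- `Φ` is a bijection from triples `(σ, λ, μ)` onto multisets of `n` cells of
`ℕ × ℕ`, and the sums of the first and second coordinates of the cells of
`Φ(σ,λ,μ)` are `Σ_i d_i(σ) + |λ|` and `Σ_j d_j(σ⁻¹) + |μ|` respectively. -/
theorem stmt12 (n : ℕ) (hn : 1 ≤ n) :
    Function.Bijective (Phi n) ∧
    ∀ t : Equiv.Perm (Fin n) × PartN n × PartN n,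
      ((Phi n t).1.map Prod.fst).sum = (∑ i : Fin n, dstat t.1 i) + ∑ i : Fin n, t.2.1.1 i ∧
      ((Phi n t).1.map Prod.snd).sum = (∑ j : Fin n, dstat t.1⁻¹ j) + ∑ i : Fin n, t.2.2.1 i := by
  refine ⟨⟨Phi_injective n, Phi_surjective n⟩, ?_⟩
  intro t
  constructor
  · rw [Phi_val, Multiset.map_map]
    have h : (Finset.univ.val.map (Prod.fst ∘ cellOf t)).sum
        = ∑ i : Fin n, (Prod.fst ∘ cellOf t) i := rfl
    rw [h]
    simp only [Function.comp, cellOf]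
    rw [Finset.sum_add_distrib]
    congr 1
    have := Equiv.sum_comp (Fin.revPerm (n := n)) t.2.1.1
    simpa using this
  · rw [Phi_val, Multiset.map_map]
    have h : (Finset.univ.val.map (Prod.snd ∘ cellOf t)).sum
        = ∑ i : Fin n, (Prod.snd ∘ cellOf t) i := rfl
    rw [h]
    simp only [Function.comp, cellOf]
    have h2 := Equiv.sum_comp t.1 (fun j => dstat t.1⁻¹ j + t.2.2.1 j.rev)
    rw [h2]
    rw [Finset.sum_add_distrib]
    congr 1
    have := Equiv.sum_comp (Fin.revPerm (n := n)) t.2.2.1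
    simpa using this
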